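/- Let μ⁺ be the successor of an infinite cardinal μ and let (B_β : β < μ⁺) enumerate all subsets of μ⁺ of cardinality μ (assuming 2^μ = μ⁺). Then there exists a family of ordinals γ(α,ε) < μ⁺ for α < μ⁺ and ε < μ, together with for each α < μ⁺ a surjective enumeration (α_η : η < μ) of the ordinals below α and a surjective enumeration (B_{αε} : ε < μ) of {B_β : β < α}, such that for all α, ε: γ(α,ε) ∈ B_{αε}, and γ(α,ε) ∉ {γ(α_η, ζ) : η < ε, ζ ≤ ε}. -/
import Mathlib

open Cardinal

namespace ConstructionGammaAux

open Set

lemma diff_nonempty_of_mk_lt {S T : Set Ordinal} (h : Cardinal.mk T < Cardinal.mk S) :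
    (S \ T).Nonempty := by
  by_contra hc
  rw [Set.not_nonempty_iff_eq_empty, Set.diff_eq_empty] at hc
  exact absurd (Cardinal.mk_le_mk_of_subset hc) (not_le.mpr h)

lemma forbidden_small (μ : Cardinal) (hμ : Cardinal.aleph0 ≤ μ) {ε : Ordinal} (hε : ε < μ.ord)
    (g : Ordinal × Ordinal → Ordinal) :
    Cardinal.mk ((fun p => g p) '' (Set.Iio ε ×ˢ Set.Iic ε)) < Cardinal.lift.{1,0} μ := by
  have h1 : Cardinal.mk ((fun p => g p) '' (Set.Iio ε ×ˢ Set.Iic ε)) ≤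
      Cardinal.mk (Set.Iio ε ×ˢ Set.Iic ε : Set (Ordinal × Ordinal)) := Cardinal.mk_image_le
  have h2 : Cardinal.mk (Set.Iio ε ×ˢ Set.Iic ε : Set (Ordinal × Ordinal)) =
      Cardinal.mk (Set.Iio ε) * Cardinal.mk (Set.Iic ε) := by
    rw [Cardinal.mk_congr (Equiv.Set.prod _ _), Cardinal.mk_prod, Cardinal.lift_id,
      Cardinal.lift_id]
  have hIic : Cardinal.mk (Set.Iic ε) ≤ Cardinal.lift.{1,0} (ε + 1).card := by
    rw [← Ordinal.mk_Iio_ordinal]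
    apply Cardinal.mk_le_mk_of_subset
    intro x hx
    exact lt_of_le_of_lt hx (lt_add_one ε)
  have hεc : ε.card < μ := Cardinal.lt_ord.mp hε
  have hε1 : (ε + 1).card < μ := by
    rw [Ordinal.add_one_eq_succ, Ordinal.card_succ]
    exact Cardinal.add_lt_of_lt hμ hεc (lt_of_lt_of_le Cardinal.one_lt_aleph0 hμ)
  have hsmall : ε.card * (ε + 1).card < μ := Cardinal.mul_lt_of_lt hμ hεc hε1
  calc Cardinal.mk ((fun p => g p) '' (Set.Iio ε ×ˢ Set.Iic ε))
      ≤ Cardinal.mk (Set.Iio ε) * Cardinal.mk (Set.Iic ε) := h2 ▸ h1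
    _ ≤ Cardinal.lift.{1,0} ε.card * Cardinal.lift.{1,0} (ε + 1).card := by
        exact mul_le_mul' (le_of_eq (Ordinal.mk_Iio_ordinal ε)) hIic
    _ = Cardinal.lift.{1,0} (ε.card * (ε + 1).card) := (Cardinal.lift_mul _ _).symm
    _ < Cardinal.lift.{1,0} μ := Cardinal.lift_lt.mpr hsmall

lemma exists_enum {μ : Cardinal} {α : Ordinal} (h0 : 0 < α) (hc : α.card ≤ μ) :
    ∃ f : Ordinal → Ordinal, (∀ η < μ.ord, f η < α) ∧ (∀ x < α, ∃ η < μ.ord, f η = x) := by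
  have h1 : Cardinal.mk (Set.Iio α) ≤ Cardinal.mk (Set.Iio μ.ord) := by
    rw [Ordinal.mk_Iio_ordinal, Ordinal.mk_Iio_ordinal, Cardinal.card_ord]
    exact Cardinal.lift_le.mpr hc
  obtain ⟨g⟩ := Cardinal.le_def _ _ |>.mp h1
  have hne : Nonempty (Set.Iio α) := ⟨⟨0, h0⟩⟩
  have hsurj : Function.Surjective (Function.invFun g) :=
    Function.invFun_surjective g.injective
  refine ⟨fun η => if h : η < μ.ord then ((Function.invFun g ⟨η, h⟩ : Set.Iio α) : Ordinal)
      else 0, ?_, ?_⟩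
  · intro η hη
    simp only [dif_pos hη]
    exact (Function.invFun g ⟨η, hη⟩).2
  · intro x hx
    obtain ⟨y, hy⟩ := hsurj ⟨x, hx⟩
    refine ⟨(y : Ordinal), y.2, ?_⟩
    simp only [Subtype.coe_eta, hy]
    exact dif_pos y.2

end ConstructionGammaAux

/-- The recursive construction behind the main theorem: given an enumeration
`(B_β : β < μ⁺)` of all subsets of `μ⁺` of cardinality `μ` (available since
`2^μ = μ⁺`), there are, for every `0 < α < μ⁺`, a surjective enumeration
`(e α η : η < μ)` of the ordinals below `α`, a surjective enumeration
`(Ben α ε : ε < μ)` of `{B_β : β < α}`, and ordinals `γ α ε < μ⁺` with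
`γ α ε ∈ Ben α ε` and `γ α ε ∉ {γ (e α η) ζ : η < ε, ζ ≤ ε}`. -/
theorem construction_gamma (μ : Cardinal) (hμ : Cardinal.aleph0 ≤ μ)
    (h2 : 2 ^ μ = Order.succ μ) (B : Ordinal → Set Ordinal)
    (hB : ∀ β < (Order.succ μ).ord, B β ⊆ Set.Iio (Order.succ μ).ord ∧
      Cardinal.mk (B β) = Cardinal.lift.{1,0} μ)
    (hBsurj : ∀ X : Set Ordinal, X ⊆ Set.Iio (Order.succ μ).ord →
      Cardinal.mk X = Cardinal.lift.{1,0} μ → ∃ β < (Order.succ μ).ord, B β = X) :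
    ∃ (γ : Ordinal → Ordinal → Ordinal) (e : Ordinal → Ordinal → Ordinal)
      (Ben : Ordinal → Ordinal → Set Ordinal),
      ∀ α : Ordinal, 0 < α → α < (Order.succ μ).ord →
        ((∀ η < μ.ord, e α η < α) ∧ (∀ x < α, ∃ η < μ.ord, e α η = x)) ∧
        ((∀ ε < μ.ord, ∃ β < α, Ben α ε = B β) ∧
          (∀ β < α, ∃ ε < μ.ord, Ben α ε = B β)) ∧
        (∀ ε < μ.ord, γ α ε ∈ Ben α ε ∧
          ∀ η < ε, ∀ ζ ≤ ε, γ (e α η) ζ ≠ γ α ε) := by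
  set κ := (Order.succ μ).ord with hκdef
  -- every ordinal below κ has card ≤ μ
  have hcard : ∀ α : Ordinal, α < κ → α.card ≤ μ := by
    intro α hα
    have := Cardinal.lt_ord.mp hα
    exact Order.lt_succ_iff.mp this
  -- choose the enumerations e
  have heex : ∀ α : Ordinal, ∃ f : Ordinal → Ordinal, 0 < α → α < κ →
      (∀ η < μ.ord, f η < α) ∧ (∀ x < α, ∃ η < μ.ord, f η = x) := by
    intro α
    by_cases h : 0 < α ∧ α < κ
    · obtain ⟨f, hf1, hf2⟩ := ConstructionGammaAux.exists_enum h.1 (hcard α h.2)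
      exact ⟨f, fun _ _ => ⟨hf1, hf2⟩⟩
    · exact ⟨fun _ => 0, fun h1 h2 => absurd ⟨h1, h2⟩ h⟩
  choose e he using heex
  -- the forbidden-avoiding choice sets
  have hpick : ∀ (α ε : Ordinal) (G : Ordinal × Ordinal → Ordinal),
      0 < α → α < κ → ε < μ.ord →
      (B (e α ε) \ ((fun p => G p) '' (Set.Iio ε ×ˢ Set.Iic ε))).Nonempty := by
    intro α ε G hα hκα hε
    apply ConstructionGammaAux.diff_nonempty_of_mk_lt
    have heακ : e α ε < κ := lt_trans ((he α hα hκα).1 ε hε) hκα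
    rw [(hB _ heακ).2]
    exact ConstructionGammaAux.forbidden_small μ hμ hε G
  -- define γ by well-founded recursion
  set F : ∀ α : Ordinal, (∀ β, β < α → Ordinal → Ordinal) → Ordinal → Ordinal :=
    fun α IH ε =>
      if h : 0 < α ∧ α < κ ∧ ε < μ.ord then
        (hpick α ε (fun p => if hb : e α p.1 < α then IH (e α p.1) hb p.2 else 0)
          h.1 h.2.1 h.2.2).some
      else 0 with hFdef
  set γ : Ordinal → Ordinal → Ordinal := Ordinal.lt_wf.fix F with hγdef
  have hfix : ∀ α : Ordinal, γ α = F α (fun β _ => γ β) := fun α =>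
    Ordinal.lt_wf.fix_eq F α
  refine ⟨γ, e, fun α ε => B (e α ε), ?_⟩
  intro α hα hκα
  obtain ⟨he1, he2⟩ := he α hα hκα
  refine ⟨⟨he1, he2⟩, ⟨?_, ?_⟩, ?_⟩
  · intro ε hε
    exact ⟨e α ε, he1 ε hε, rfl⟩
  · intro β hβ
    obtain ⟨ε, hε, hεeq⟩ := he2 β hβ
    exact ⟨ε, hε, by show B (e α ε) = B β; rw [hεeq]⟩
  · intro ε hε
    have hγeq : γ α ε =
        (hpick α ε (fun p => if hb : e α p.1 < α then γ (e α p.1) p.2 else 0)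
          hα hκα hε).some := by
      rw [hfix α]
      simp only [hFdef]
      rw [dif_pos ⟨hα, hκα, hε⟩]
    have hmem := (hpick α ε (fun p => if hb : e α p.1 < α then γ (e α p.1) p.2 else 0)
          hα hκα hε).some_mem
    rw [← hγeq] at hmem
    refine ⟨hmem.1, ?_⟩
    intro η hη ζ hζ heq
    apply hmem.2
    refine ⟨(η, ζ), ⟨hη, hζ⟩, ?_⟩
    have hlt : e α η < α := he1 η (lt_trans hη hε)
    simp only [dif_pos hlt]
    exact heq
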